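/- Let n ≥ 0 and k ≥ 3, and let ρ be a k-cocycle on 𝔽₂ⁿ with values in (½ℤ)/ℤ ⊂ 𝕋. Then ρ is a k-coboundary with values in (½ℤ)/ℤ (i.e. there exists F : 𝔽₂ⁿ → (½ℤ)/ℤ with ρ_{h₁,…,h_{k+1}} = ∂_{h₁}⋯∂_{h_{k+1}} F) if and only if ρ is strongly 2-homogeneous, meaning: there exists ψ : 𝔽₂ⁿ × 𝔽₂ⁿ → 𝕋 such that (i) for all x, h₁,…,h_{k+1} ∈ 𝔽₂ⁿ, ρ_{h₁,…,h_{k+1}}(x) = Σ_{ω∈{0,1}^k} (−1)^{k−|ω|} ψ(x + ω·(h₁,…,h_k), x + ω·(h₁,…,h_k) + h_{k+1}), and (ii) for all x, h₁,…,h_k ∈ 𝔽₂ⁿ, Σ_{ω∈{0,1}^{k−1}} (−1)^{|ω|} · 2ψ(x + ω·(h₁,…,h_{k−1}), x + ω·(h₁,…,h_{k−1}) + h_k) = 0 (i.e. 2ψ is a polynomial of degree at most k−2 on the space of 1-cubes of 𝔽₂ⁿ). -/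

import Mathlib

open scoped BigOperators Classical

abbrev Gn (n : ℕ) : Type := Fin n → ZMod 2
abbrev 𝕋 : Type := AddCircle (1 : ℝ)

/-- Discrete derivative `∂_h F = T^h F - F`. -/
def del {G H : Type*} [AddCommGroup G] [AddCommGroup H] (h : G) (F : G → H) : G → H :=
  fun x => F (x + h) - F x

/-- Iterated discrete derivative `∂_{h 0} ⋯ ∂_{h (m-1)} F`. -/
def delIter {G H : Type*} [AddCommGroup G] [AddCommGroup H] {m : ℕ}
    (h : Fin m → G) (F : G → H) : G → H :=
  (List.ofFn h).foldr del F

/-- `F` is a (non-classical) polynomial of degree at most `k` (`k : ℕ`). -/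
def IsPolyN {G H : Type*} [AddCommGroup G] [AddCommGroup H] (k : ℕ) (F : G → H) : Prop :=
  ∀ h : Fin (k + 1) → G, delIter h F = 0

section Basic

variable {G H : Type*} [AddCommGroup G] [AddCommGroup H]

def delList (l : List G) (F : G → H) : G → H := l.foldr del F

@[simp] lemma delList_nil (F : G → H) : delList [] F = F := rfl

@[simp] lemma delList_cons (a : G) (l : List G) (F : G → H) :
    delList (a :: l) F = del a (delList l F) := rfl

lemma delIter_eq_delList {m : ℕ} (h : Fin m → G) (F : G → H) :
    delIter h F = delList (List.ofFn h) F := rfl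

lemma del_apply (a : G) (F : G → H) (x : G) : del a F x = F (x + a) - F x := rfl

@[simp] lemma del_zero_fun (a : G) : del a (0 : G → H) = 0 := by
  funext x; simp [del]

lemma del_add (a : G) (F₁ F₂ : G → H) : del a (F₁ + F₂) = del a F₁ + del a F₂ := by
  funext x; simp only [del, Pi.add_apply]; abel

lemma del_neg (a : G) (F : G → H) : del a (-F) = -del a F := by
  funext x; simp only [del, Pi.neg_apply]; abel

lemma del_sub (a : G) (F₁ F₂ : G → H) : del a (F₁ - F₂) = del a F₁ - del a F₂ := by
  funext x; simp only [del, Pi.sub_apply]; abel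

lemma del_zsmul (a : G) (c : ℤ) (F : G → H) : del a (c • F) = c • del a F := by
  funext x; simp only [del, Pi.smul_apply, smul_sub]

lemma del_comp (a b : G) (F : G → H) :
    del a (fun x => F (x + b)) = fun x => del a F (x + b) := by
  funext x; simp only [del, add_right_comm]

lemma del_comm (a b : G) (F : G → H) : del a (del b F) = del b (del a F) := by
  funext x
  simp only [del]
  rw [add_right_comm x b a]
  abel

lemma del_add_dir (a b : G) (F : G → H) :
    del (a + b) F = del a F + fun x => del b F (x + a) := by
  funext x
  simp only [del, Pi.add_apply, ← add_assoc]
  abel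

@[simp] lemma del_zero_dir (F : G → H) : del (0 : G) F = 0 := by
  funext x; simp [del]

lemma delList_append (l₁ l₂ : List G) (F : G → H) :
    delList (l₁ ++ l₂) F = delList l₁ (delList l₂ F) :=
  List.foldr_append

@[simp] lemma delList_zero_fun (l : List G) : delList l (0 : G → H) = 0 := by
  induction l with
  | nil => rfl
  | cons a l ih => rw [delList_cons, ih, del_zero_fun]

lemma delList_add (l : List G) (F₁ F₂ : G → H) :
    delList l (F₁ + F₂) = delList l F₁ + delList l F₂ := by
  induction l with
  | nil => rfl
  | cons a l ih => rw [delList_cons, ih, del_add, delList_cons, delList_cons]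

lemma delList_neg (l : List G) (F : G → H) : delList l (-F) = -delList l F := by
  induction l with
  | nil => rfl
  | cons a l ih => rw [delList_cons, ih, del_neg, delList_cons]

lemma delList_sub (l : List G) (F₁ F₂ : G → H) :
    delList l (F₁ - F₂) = delList l F₁ - delList l F₂ := by
  induction l with
  | nil => rfl
  | cons a l ih => rw [delList_cons, ih, del_sub, delList_cons, delList_cons]

lemma delList_zsmul (l : List G) (c : ℤ) (F : G → H) :
    delList l (c • F) = c • delList l F := by
  induction l with
  | nil => rfl
  | cons a l ih => rw [delList_cons, ih, del_zsmul, delList_cons]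

lemma delList_comp (l : List G) (b : G) (F : G → H) :
    delList l (fun x => F (x + b)) = fun x => delList l F (x + b) := by
  induction l with
  | nil => rfl
  | cons a l ih => rw [delList_cons, ih, del_comp, delList_cons]

lemma delList_perm {l₁ l₂ : List G} (h : l₁.Perm l₂) (F : G → H) :
    delList l₁ F = delList l₂ F := by
  induction h with
  | nil => rfl
  | cons a _ ih => rw [delList_cons, delList_cons, ih]
  | swap a b l => rw [delList_cons, delList_cons, delList_cons, delList_cons, del_comm]
  | trans _ _ ih₁ ih₂ => rw [ih₁, ih₂]

lemma delIter_succ {m : ℕ} (h : Fin (m + 1) → G) (F : G → H) :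
    delIter h F = del (h 0) (delIter (Fin.tail h) F) := by
  rw [delIter_eq_delList, delIter_eq_delList, List.ofFn_succ, delList_cons]
  rfl

lemma delIter_snoc {m : ℕ} (h : Fin m → G) (a : G) (F : G → H) :
    delIter (Fin.snoc h a) F = delIter h (del a F) := by
  rw [delIter_eq_delList, delIter_eq_delList, List.ofFn_succ', List.concat_eq_append,
    delList_append]
  simp only [Fin.snoc_castSucc, Fin.snoc_last]
  rfl

lemma delList_eq_delIter (l : List G) (F : G → H) :
    delList l F = delIter (fun i : Fin l.length => l.get i) F := by
  rw [delIter_eq_delList, List.ofFn_get]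

lemma isPolyN_iff_lists (d : ℕ) (F : G → H) :
    IsPolyN d F ↔ ∀ l : List G, l.length = d + 1 → delList l F = 0 := by
  constructor
  · intro hF l hl
    have h := hF (fun i : Fin (d + 1) => l.get (Fin.cast hl.symm i))
    rw [delIter_eq_delList] at h
    have heq : List.ofFn (fun i : Fin (d + 1) => l.get (Fin.cast hl.symm i)) = l := by
      apply List.ext_getElem
      · simp [hl]
      · intro i h₁ h₂
        rw [List.getElem_ofFn]
        rfl
    rwa [heq] at h
  · intro h hv
    rw [delIter_eq_delList]
    exact h _ (by simp)

lemma IsPolyN.delList_zero {d : ℕ} {F : G → H} (hF : IsPolyN d F) {l : List G}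
    (hl : d + 1 ≤ l.length) : delList l F = 0 := by
  have h1 : l = l.take (l.length - (d + 1)) ++ l.drop (l.length - (d + 1)) :=
    (List.take_append_drop _ _).symm
  rw [h1, delList_append,
    (isPolyN_iff_lists d F).1 hF _ (by rw [List.length_drop]; omega), delList_zero_fun]

lemma isPolyN_zero (d : ℕ) : IsPolyN d (0 : G → H) := by
  intro hv; rw [delIter_eq_delList, delList_zero_fun]

lemma IsPolyN.mono {d d' : ℕ} (hd : d ≤ d') {F : G → H} (hF : IsPolyN d F) : IsPolyN d' F := by
  rw [isPolyN_iff_lists]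
  intro l hl
  exact hF.delList_zero (by omega)

lemma IsPolyN.add {d : ℕ} {F₁ F₂ : G → H} (h₁ : IsPolyN d F₁) (h₂ : IsPolyN d F₂) :
    IsPolyN d (F₁ + F₂) := by
  intro hv
  rw [delIter_eq_delList, delList_add, ← delIter_eq_delList, ← delIter_eq_delList,
    h₁ hv, h₂ hv, add_zero]

lemma IsPolyN.neg {d : ℕ} {F : G → H} (h₁ : IsPolyN d F) : IsPolyN d (-F) := by
  intro hv
  rw [delIter_eq_delList, delList_neg, ← delIter_eq_delList, h₁ hv, neg_zero]

lemma IsPolyN.sub {d : ℕ} {F₁ F₂ : G → H} (h₁ : IsPolyN d F₁) (h₂ : IsPolyN d F₂) :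
    IsPolyN d (F₁ - F₂) := by
  intro hv
  rw [delIter_eq_delList, delList_sub, ← delIter_eq_delList, ← delIter_eq_delList,
    h₁ hv, h₂ hv, sub_zero]

lemma IsPolyN.comp_add {d : ℕ} {F : G → H} (h₁ : IsPolyN d F) (b : G) :
    IsPolyN d (fun x => F (x + b)) := by
  intro hv
  rw [delIter_eq_delList, delList_comp]
  have := h₁ hv
  rw [delIter_eq_delList] at this
  rw [this]
  rfl

lemma IsPolyN.derivative {d : ℕ} {F : G → H} (h₁ : IsPolyN (d + 1) F) (a : G) :
    IsPolyN d (del a F) := by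
  rw [isPolyN_iff_lists]
  intro l hl
  have : delList l (del a F) = delList (l ++ [a]) F := by
    rw [delList_append]; rfl
  rw [this]
  exact h₁.delList_zero (by simp [hl])

lemma IsPolyN.finset_sum {ι : Type*} {d : ℕ} (s : Finset ι) (f : ι → G → H)
    (h : ∀ i ∈ s, IsPolyN d (f i)) : IsPolyN d (∑ i ∈ s, f i) :=
  Finset.sum_induction f _ (fun _ _ ha hb => ha.add hb) (isPolyN_zero d) h

lemma isPolyN_const (d : ℕ) (c : H) : IsPolyN d (fun _ : G => c) := by
  rw [isPolyN_iff_lists]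
  intro l hl
  rcases List.eq_nil_or_concat l with rfl | ⟨L, b, rfl⟩
  · simp at hl
  · rw [List.concat_eq_append, delList_append]
    have : delList [b] (fun _ : G => c) = 0 := by
      funext x; simp [delList, del]
    rw [this, delList_zero_fun]

lemma isPolyN_succ_of_del {d : ℕ} {F : G → H} (hdel : ∀ a : G, IsPolyN d (del a F)) :
    IsPolyN (d + 1) F := by
  rw [isPolyN_iff_lists]
  intro l hl
  rcases List.eq_nil_or_concat l with rfl | ⟨L, b, rfl⟩
  · simp at hl
  · rw [List.concat_eq_append, delList_append]
    have hL : L.length = d + 1 := by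
      have := hl; simp at this; omega
    have : delList [b] F = del b F := rfl
    rw [this]
    exact (hdel b).delList_zero (by omega)

end Basic
section GnLemmas

variable {n : ℕ} {H : Type*} [AddCommGroup H]

lemma Gn.add_self (x : Gn n) : x + x = 0 := by
  funext i
  show x i + x i = 0
  have : ∀ z : ZMod 2, z + z = 0 := by decide
  exact this (x i)

lemma del_del_self (a : Gn n) (F : Gn n → H) :
    del a (del a F) = -del a ((2 : ℤ) • F) := by
  funext x
  simp only [del, Pi.smul_apply, Pi.neg_apply]
  rw [add_assoc, Gn.add_self, add_zero]
  rw [two_smul, two_smul]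
  abel

lemma IsPolyN.two_zsmul {d : ℕ} {F : Gn n → H} (hF : IsPolyN (d + 1) F) :
    IsPolyN d ((2 : ℤ) • F) := by
  rw [isPolyN_iff_lists]
  intro l hl
  rcases List.eq_nil_or_concat l with rfl | ⟨L, b, rfl⟩
  · simp at hl
  · rw [List.concat_eq_append, delList_append]
    have h1 : delList [b] ((2 : ℤ) • F) = del b ((2 : ℤ) • F) := rfl
    rw [h1, ← neg_neg (del b ((2:ℤ) • F)), ← del_del_self, delList_neg]
    have h2 : delList L (del b (del b F)) = delList (L ++ [b, b]) F := by
      rw [delList_append]; rfl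
    rw [h2, hF.delList_zero (by simp at hl ⊢; omega), neg_zero]

lemma IsPolyN.pow_two_zsmul_del {d : ℕ} {F : Gn n → H} (hF : IsPolyN d F) (a : Gn n) :
    (2 : ℤ) ^ d • del a F = 0 := by
  induction d generalizing F with
  | zero =>
    have : del a F = delList [a] F := rfl
    rw [pow_zero, one_smul, this, hF.delList_zero (by simp)]
  | succ d ih =>
    have h2 : IsPolyN d ((2 : ℤ) • F) := hF.two_zsmul
    have := ih h2
    rw [del_zsmul] at this
    rw [pow_succ, mul_smul]
    exact this

lemma del_basis_closure {d : ℕ} {F : Gn n → H}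
    (hb : ∀ i : Fin n, IsPolyN d (del (Pi.single i 1) F)) :
    ∀ a : Gn n, IsPolyN d (del a F) := by
  intro a
  have hrep : a = ∑ i, Pi.single i (a i) := (Finset.univ_sum_single a).symm
  rw [hrep]
  refine Finset.sum_induction _ (fun x => IsPolyN d (del x F)) ?_ ?_ ?_
  · intro x y hx hy
    rw [del_add_dir]
    exact hx.add (hy.comp_add x)
  · show IsPolyN d (del (0 : Gn n) F)
    rw [del_zero_dir]; exact isPolyN_zero d
  · intro i _
    have hz : ∀ z : ZMod 2, z = 0 ∨ z = 1 := by decide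
    rcases hz (a i) with h | h
    · rw [h, Pi.single_zero, del_zero_dir]; exact isPolyN_zero d
    · rw [h]; exact hb i

/-- Monomial function `x ↦ (∏_{i ∈ S} x_i) • c`. -/
def monF (S : Finset (Fin n)) (c : H) : Gn n → H :=
  fun x => (∏ i ∈ S, (x i).val) • c

@[simp] lemma monF_zero (S : Finset (Fin n)) : monF S (0 : H) = 0 := by
  funext x; simp [monF]

lemma monF_empty (c : H) : monF (∅ : Finset (Fin n)) c = fun _ => c := by
  funext x; simp [monF]

lemma del_single_monF (i : Fin n) (S : Finset (Fin n)) (c : H) :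
    del (Pi.single i 1) (monF S c) =
      if i ∈ S then monF (S.erase i) c - monF S ((2 : ℤ) • c) else 0 := by
  set v : Gn n := Pi.single i 1 with hv
  have hvj : ∀ j : Fin n, j ≠ i → v j = 0 := by
    intro j hj; rw [hv]; exact Pi.single_eq_of_ne hj 1
  have hvi : v i = 1 := by rw [hv]; exact Pi.single_eq_same i 1
  have hxj : ∀ (x : Gn n) (j : Fin n), j ≠ i → (x + v) j = x j := by
    intro x j hj
    show x j + v j = x j
    rw [hvj j hj, add_zero]
  by_cases hi : i ∈ S
  · rw [if_pos hi]
    funext x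
    have hprod : ∀ y : Gn n, (∏ j ∈ S, (y j).val) = (∏ j ∈ S.erase i, (y j).val) * (y i).val :=
      fun y => (Finset.prod_erase_mul S _ hi).symm
    have herase : (∏ j ∈ S.erase i, ((x + v) j).val) = ∏ j ∈ S.erase i, (x j).val :=
      Finset.prod_congr rfl fun j hj => congrArg ZMod.val (hxj x j (Finset.ne_of_mem_erase hj))
    have hxi : (x + v) i = x i + 1 := by
      show x i + v i = x i + 1
      rw [hvi]
    simp only [del, monF, Pi.sub_apply]
    rw [hprod (x + v), hprod x, herase, hxi]
    set p := ∏ j ∈ S.erase i, (x j).val with hp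
    have hz : ∀ z : ZMod 2, z = 0 ∨ z = 1 := by decide
    rcases hz (x i) with h | h
    · rw [h]
      have h01 : ((0 : ZMod 2) + 1).val = 1 := by decide
      have h00 : (0 : ZMod 2).val = 0 := by decide
      rw [h01, h00, mul_one, mul_zero, zero_smul, zero_smul, sub_zero]
    · rw [h]
      have h11 : ((1 : ZMod 2) + 1).val = 0 := by decide
      have h1v : (1 : ZMod 2).val = 1 := by decide
      rw [h11, h1v]
      simp only [mul_zero, mul_one, zero_smul, zero_sub]
      rw [smul_comm]
      rw [two_smul]
      abel
  · rw [if_neg hi]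
    funext x
    have hS : (∏ j ∈ S, ((x + v) j).val) = ∏ j ∈ S, (x j).val := by
      refine Finset.prod_congr rfl fun j hj => ?_
      exact congrArg ZMod.val (hxj x j (fun hji => hi (hji ▸ hj)))
    simp only [del, monF, Pi.zero_apply]
    rw [hS, sub_self]

lemma monF_isPolyN (N : ℕ) :
    ∀ (S : Finset (Fin n)) (m : ℕ) (c : H), S.card + m = N → (2 : ℤ) ^ (m + 1) • c = 0 →
      IsPolyN N (monF S c) := by
  induction N using Nat.strong_induction_on with
  | _ N ih =>
    intro S m c hN hc
    rcases Finset.eq_empty_or_nonempty S with rfl | ⟨i, hi⟩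
    · rw [monF_empty]
      exact isPolyN_const N c
    · have hcard : 1 ≤ S.card := Finset.card_pos.2 ⟨i, hi⟩
      obtain ⟨N', rfl⟩ : ∃ N', N = N' + 1 := ⟨N - 1, by omega⟩
      apply isPolyN_succ_of_del
      apply del_basis_closure
      intro j
      rw [del_single_monF]
      by_cases hj : j ∈ S
      · rw [if_pos hj]
        refine IsPolyN.sub ?_ ?_
        · exact ih N' (by omega) (S.erase j) m c
            (by rw [Finset.card_erase_of_mem hj]; omega) hc
        · cases m with
          | zero =>
            have h2c : (2 : ℤ) • c = 0 := by
              have := hc; rwa [zero_add, pow_one] at this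
            rw [h2c, monF_zero]
            exact isPolyN_zero N'
          | succ m' =>
            refine ih N' (by omega) S m' ((2 : ℤ) • c) (by omega) ?_
            rw [smul_smul, ← pow_succ]
            exact hc
      · rw [if_neg hj]
        exact isPolyN_zero N'

/-- Iterated derivative along basis vectors indexed by a finite set. -/
noncomputable def Dset (S : Finset (Fin n)) (F : Gn n → H) : Gn n → H :=
  delList (S.toList.map fun i => (Pi.single i 1 : Gn n)) F

@[simp] lemma Dset_empty (F : Gn n → H) : Dset (∅ : Finset (Fin n)) F = F := by
  rw [Dset, Finset.toList_empty]; rfl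

lemma Dset_insert_inner {i : Fin n} {S : Finset (Fin n)} (hi : i ∉ S) (F : Gn n → H) :
    Dset (insert i S) F = Dset S (del (Pi.single i 1) F) := by
  rw [Dset, Dset]
  have p1 : ((insert i S).toList.map fun j => (Pi.single j 1 : Gn n)).Perm
      ((S.toList.map fun j => (Pi.single j 1 : Gn n)) ++ [Pi.single i 1]) := by
    refine ((Finset.toList_insert hi).map _).trans ?_
    exact (List.perm_append_singleton _ _).symm
  rw [delList_perm p1, delList_append]
  rfl

lemma Dset_insert_outer {i : Fin n} {S : Finset (Fin n)} (hi : i ∉ S) (F : Gn n → H) :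
    Dset (insert i S) F = del (Pi.single i 1) (Dset S F) := by
  rw [Dset, Dset, delList_perm ((Finset.toList_insert hi).map _)]
  rfl

lemma Dset_add (S : Finset (Fin n)) (F₁ F₂ : Gn n → H) :
    Dset S (F₁ + F₂) = Dset S F₁ + Dset S F₂ := delList_add _ _ _

lemma Dset_sub (S : Finset (Fin n)) (F₁ F₂ : Gn n → H) :
    Dset S (F₁ - F₂) = Dset S F₁ - Dset S F₂ := delList_sub _ _ _

lemma Dset_zsmul (S : Finset (Fin n)) (c : ℤ) (F : Gn n → H) :
    Dset S (c • F) = c • Dset S F := delList_zsmul _ _ _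

@[simp] lemma Dset_zero_fun (S : Finset (Fin n)) : Dset S (0 : Gn n → H) = 0 :=
  delList_zero_fun _

lemma Dset_eq_zero {d : ℕ} {F : Gn n → H} (hF : IsPolyN d F) {S : Finset (Fin n)}
    (hS : d + 1 ≤ S.card) : Dset S F = 0 := by
  apply hF.delList_zero
  rw [List.length_map, Finset.length_toList]
  exact hS

lemma Dset_finset_sum {ι : Type*} (s : Finset ι) (f : ι → Gn n → H) (S : Finset (Fin n)) :
    Dset S (∑ j ∈ s, f j) = ∑ j ∈ s, Dset S (f j) := by
  induction s using Finset.induction_on with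
  | empty => simp
  | insert _ _ hj ih => rw [Finset.sum_insert hj, Finset.sum_insert hj, Dset_add, ih]

lemma isPolyN_Dset {e : ℕ} (S : Finset (Fin n)) :
    ∀ {d : ℕ} {F : Gn n → H}, d ≤ e + S.card → IsPolyN d F → IsPolyN e (Dset S F) := by
  induction S using Finset.induction_on with
  | empty =>
    intro d F hde hF
    rw [Dset_empty]
    exact hF.mono (by simpa using hde)
  | @insert i S hi ih =>
    intro d F hde hF
    rw [Dset_insert_inner hi]
    have h1 : IsPolyN (e + S.card + 1) F := hF.mono (by rw [Finset.card_insert_of_notMem hi] at hde; omega)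
    exact ih le_rfl (h1.derivative _)

lemma Dset_torsion {d : ℕ} {F : Gn n → H} (hF : IsPolyN d F) {S : Finset (Fin n)}
    (hne : S.Nonempty) (hcard : S.card ≤ d) :
    (2 : ℤ) ^ (d + 1 - S.card) • Dset S F = 0 := by
  obtain ⟨i, hi⟩ := hne
  have heq : Dset S F = del (Pi.single i 1) (Dset (S.erase i) F) := by
    conv_lhs => rw [← Finset.insert_erase hi]
    rw [Dset_insert_outer (Finset.notMem_erase i S)]
  rw [heq]
  have hpoly : IsPolyN (d + 1 - S.card) (Dset (S.erase i) F) := by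
    refine isPolyN_Dset _ ?_ hF
    rw [Finset.card_erase_of_mem hi]
    omega
  exact hpoly.pow_two_zsmul_del _

lemma Dset_monF (S : Finset (Fin n)) :
    ∀ (T : Finset (Fin n)) (c : H), Dset S (monF T c) 0 = if S = T then c else 0 := by
  induction S using Finset.induction_on with
  | empty =>
    intro T c
    rw [Dset_empty]
    by_cases hT : T = ∅
    · subst hT; simp [monF]
    · obtain ⟨j, hj⟩ := Finset.nonempty_iff_ne_empty.2 hT
      rw [if_neg (by intro h; exact hT h.symm)]
      show (∏ i ∈ T, ((0 : Gn n) i).val) • c = 0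
      rw [Finset.prod_eq_zero hj (by simp), zero_smul]
  | @insert i S hi ih =>
    intro T c
    rw [Dset_insert_inner hi, del_single_monF]
    by_cases hiT : i ∈ T
    · rw [if_pos hiT]
      have hDsub := Dset_sub S (monF (T.erase i) c) (monF T ((2:ℤ) • c))
      rw [hDsub]
      rw [Pi.sub_apply, ih (T.erase i) c, ih T ((2:ℤ) • c)]
      have h2 : S ≠ T := fun h => hi (h ▸ hiT)
      rw [if_neg h2, sub_zero]
      have hiff : (S = T.erase i) ↔ (insert i S = T) := by
        constructor
        · intro h; rw [h, Finset.insert_erase hiT]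
        · intro h; rw [← h, Finset.erase_insert hi]
      by_cases hS : S = T.erase i
      · rw [if_pos hS, if_pos (hiff.1 hS)]
      · rw [if_neg hS, if_neg (fun h => hS (hiff.2 h))]
    · rw [if_neg hiT, Dset_zero_fun]
      have hne : insert i S ≠ T := fun h => hiT (h ▸ Finset.mem_insert_self i S)
      rw [if_neg hne]
      rfl

end GnLemmas
section Eval

variable {n : ℕ} {H : Type*} [AddCommGroup H]

/-- indicator vector of a finset -/
def indv (U : Finset (Fin n)) : Gn n := fun i => if i ∈ U then 1 else 0

@[simp] lemma indv_empty : indv (∅ : Finset (Fin n)) = 0 := by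
  funext i; simp [indv]

lemma indv_insert {i : Fin n} {U : Finset (Fin n)} (hi : i ∉ U) :
    indv (insert i U) = indv U + Pi.single i 1 := by
  set v : Gn n := Pi.single i 1 with hv
  funext j
  show _ = indv U j + v j
  rw [indv, indv, hv, Pi.single_apply]
  by_cases hj : j = i
  · subst hj
    rw [if_pos (Finset.mem_insert_self j U), if_neg (fun h => hi h), if_pos rfl, zero_add]
  · rw [if_neg hj, add_zero]
    by_cases hjU : j ∈ U
    · rw [if_pos (Finset.mem_insert_of_mem hjU), if_pos hjU]
    · rw [if_neg (by simp [hj, hjU]), if_neg hjU]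

lemma eq_indv (x : Gn n) : x = indv (Finset.univ.filter fun i => x i = 1) := by
  funext i
  rw [indv]
  have hz : ∀ z : ZMod 2, z = 0 ∨ z = 1 := by decide
  by_cases h : x i = 1
  · rw [if_pos (by simp [h]), h]
  · rcases hz (x i) with h0 | h1
    · rw [if_neg (by simp [h]), h0]
    · exact absurd h1 h

lemma monF_indv (S U : Finset (Fin n)) (c : H) :
    monF S c (indv U) = if S ⊆ U then c else 0 := by
  rw [monF]
  by_cases hSU : S ⊆ U
  · rw [if_pos hSU]
    have : (∏ i ∈ S, ((indv U) i).val) = 1 := by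
      refine Finset.prod_eq_one fun i hi => ?_
      have : indv U i = 1 := by rw [indv]; rw [if_pos (hSU hi)]
      rw [this]; decide
    rw [this, one_smul]
  · rw [if_neg hSU]
    obtain ⟨j, hjS, hjU⟩ := Finset.not_subset.1 hSU
    have : ((indv U) j).val = 0 := by
      have : indv U j = 0 := by rw [indv, if_neg hjU]
      rw [this]; decide
    rw [Finset.prod_eq_zero hjS this, zero_smul]

lemma sum_powerset_Dset (U : Finset (Fin n)) :
    ∀ F : Gn n → H, ∑ S ∈ U.powerset, Dset S F 0 = F (indv U) := by
  induction U using Finset.induction_on with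
  | empty =>
    intro F
    rw [Finset.powerset_empty, Finset.sum_singleton, Dset_empty, indv_empty]
  | @insert i U hi ih =>
    intro F
    set v : Gn n := Pi.single i 1 with hv
    rw [Finset.sum_powerset_insert hi]
    have h1 : ∀ S ∈ U.powerset, Dset (insert i S) F 0 = Dset S (del v F) 0 := by
      intro S hS
      rw [Dset_insert_inner (fun hiS => hi ((Finset.mem_powerset.1 hS) hiS))]
    rw [Finset.sum_congr rfl h1, ← Finset.sum_add_distrib]
    have h2 : ∀ S ∈ U.powerset, Dset S F 0 + Dset S (del v F) 0
        = Dset S (fun x => F (x + v)) 0 := by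
      intro S _
      have hfun : (fun x : Gn n => F (x + v)) = F + del v F := by
        funext x
        show F (x + v) = F x + (F (x + v) - F x)
        abel
      rw [hfun, Dset_add]
      rfl
    rw [Finset.sum_congr rfl h2]
    refine (ih (fun x => F (x + v))).trans ?_
    rw [indv_insert hi]

lemma eval_monF (F : Gn n → H) (x : Gn n) :
    ∑ S : Finset (Fin n), monF S (Dset S F 0) x = F x := by
  set U := Finset.univ.filter (fun i => x i = 1) with hU
  have hx : x = indv U := eq_indv x
  rw [hx]
  have h1 : ∀ S : Finset (Fin n), monF S (Dset S F 0) (indv U)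
      = if S ⊆ U then Dset S F 0 else 0 := fun S => monF_indv S U _
  rw [Finset.sum_congr rfl (fun S _ => h1 S), ← Finset.sum_filter]
  have hpow : Finset.univ.filter (fun S => S ⊆ U) = U.powerset := by
    ext S; simp [Finset.mem_powerset]
  rw [hpow, sum_powerset_Dset U F]

end Eval
section Expand

variable {n : ℕ} {H : Type*} [AddCommGroup H]

lemma sumval_le {m : ℕ} (ω : Fin m → ZMod 2) : (∑ i, (ω i).val) ≤ m := by
  have h1 : ∀ i ∈ Finset.univ, (ω i).val ≤ 1 := by
    intro i _
    have := ZMod.val_lt (ω i)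
    omega
  calc (∑ i, (ω i).val) ≤ Finset.univ.card • 1 := Finset.sum_le_card_nsmul _ _ 1 h1
    _ = m := by simp

lemma neg_one_pow_sub (M N : ℕ) (h : N ≤ M) :
    ((-1 : ℤ)) ^ (M - N) = (-1) ^ M * (-1) ^ N := by
  have h2 : M - N + N = M := by omega
  have h3 : ((-1 : ℤ)) ^ (M - N) * ((-1) ^ N * (-1) ^ N) = (-1) ^ M * (-1) ^ N := by
    rw [← mul_assoc, ← pow_add, h2]
  have h4 : ((-1 : ℤ)) ^ N * (-1) ^ N = 1 := by
    rw [← mul_pow]; norm_num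
  rw [h4, mul_one] at h3
  exact h3

lemma sum_zmod2 {M : Type*} [AddCommMonoid M] (f : ZMod 2 → M) :
    ∑ x : ZMod 2, f x = f 0 + f 1 := by
  have huniv : (Finset.univ : Finset (ZMod 2)) = {0, 1} := by decide
  rw [huniv, Finset.sum_insert (by decide), Finset.sum_singleton]

lemma expand {m : ℕ} (h : Fin m → Gn n) (F : Gn n → H) (x : Gn n) :
    delIter h F x = ∑ ω : Gn m,
      ((-1 : ℤ) ^ (m - ∑ i, (ω i).val)) • F (x + ∑ i, ω i • h i) := by
  induction m generalizing x with
  | zero =>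
    have h0 : delIter h F = F := by
      rw [delIter_eq_delList, List.ofFn_zero, delList_nil]
    rw [h0]
    rw [Fintype.sum_unique]
    simp
  | succ m ih =>
    have hsplit : delIter h F = del (h 0) (delIter (Fin.tail h) F) := delIter_succ h F
    rw [hsplit, del_apply, ih (Fin.tail h) (x + h 0), ih (Fin.tail h) x]
    rw [← Equiv.sum_comp (Fin.consEquiv (fun _ : Fin (m+1) => ZMod 2))
      (fun ω : Gn (m+1) => ((-1 : ℤ) ^ ((m+1) - ∑ i, (ω i).val)) • F (x + ∑ i, ω i • h i))]
    rw [Fintype.sum_prod_type]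
    rw [sum_zmod2 (fun ε => ∑ ω' : Gn m, _)]
    have hc0 : ∀ (ε : ZMod 2) (ω' : Gn m),
        (Fin.consEquiv (fun _ : Fin (m+1) => ZMod 2)) (ε, ω') = Fin.cons ε ω' := fun _ _ => rfl
    have hval : ∀ (ε : ZMod 2) (ω' : Gn m),
        (∑ i : Fin (m+1), ((Fin.cons ε ω' : Gn (m+1)) i).val) = ε.val + ∑ i, (ω' i).val := by
      intro ε ω'
      rw [Fin.sum_univ_succ]
      congr 1
    have hvec : ∀ (ε : ZMod 2) (ω' : Gn m),
        (∑ i : Fin (m+1), ((Fin.cons ε ω' : Gn (m+1)) i) • h i)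
          = ε • h 0 + ∑ i, ω' i • (Fin.tail h) i := by
      intro ε ω'
      rw [Fin.sum_univ_succ]
      congr 1
    -- ε = 0 branch
    have hb0 : (∑ ω' : Gn m, ((-1 : ℤ) ^ ((m+1) - ∑ i, ((Fin.cons (0 : ZMod 2) ω' : Gn (m+1)) i).val))
          • F (x + ∑ i, ((Fin.cons (0 : ZMod 2) ω' : Gn (m+1)) i) • h i))
        = -∑ ω' : Gn m, ((-1 : ℤ) ^ (m - ∑ i, (ω' i).val)) • F (x + ∑ i, ω' i • (Fin.tail h) i) := by
      rw [← Finset.sum_neg_distrib]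
      refine Finset.sum_congr rfl fun ω' _ => ?_
      rw [hval 0 ω', hvec 0 ω']
      have hz : (0 : ZMod 2).val = 0 := by decide
      rw [hz, zero_add, zero_smul, zero_add]
      have he : m + 1 - (∑ i, (ω' i).val) = (m - ∑ i, (ω' i).val) + 1 := by
        have := sumval_le ω'; omega
      rw [he, pow_succ]
      rw [mul_comm, neg_one_mul, neg_smul]
    -- ε = 1 branch
    have hb1 : (∑ ω' : Gn m, ((-1 : ℤ) ^ ((m+1) - ∑ i, ((Fin.cons (1 : ZMod 2) ω' : Gn (m+1)) i).val))
          • F (x + ∑ i, ((Fin.cons (1 : ZMod 2) ω' : Gn (m+1)) i) • h i))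
        = ∑ ω' : Gn m, ((-1 : ℤ) ^ (m - ∑ i, (ω' i).val)) • F ((x + h 0) + ∑ i, ω' i • (Fin.tail h) i) := by
      refine Finset.sum_congr rfl fun ω' _ => ?_
      rw [hval 1 ω', hvec 1 ω']
      have hz : (1 : ZMod 2).val = 1 := by decide
      rw [hz, one_smul]
      have he : m + 1 - (1 + ∑ i, (ω' i).val) = m - ∑ i, (ω' i).val := by
        have := sumval_le ω'; omega
      rw [he]
      congr 2
      rw [← add_assoc]
    simp only [hc0]
    rw [hb0, hb1]
    abel

end Expand

section FinPlumbing

variable {N : ℕ} {α : Type*}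

lemma fin_comp_rotate (c : α) (hv : Fin (N + 1) → α) :
    (Fin.cons c hv : Fin (N + 2) → α) ∘ (finRotate (N + 2)) = Fin.snoc hv c := by
  funext i
  show (Fin.cons c hv : Fin (N + 2) → α) ((finRotate (N + 2)) i) = _
  rw [finRotate_succ_apply]
  induction i using Fin.lastCases with
  | last =>
    rw [Fin.last_add_one]
    rw [Fin.cons_zero, Fin.snoc_last]
  | cast j =>
    rw [Fin.coeSucc_eq_succ, Fin.cons_succ, Fin.snoc_castSucc]

lemma fin_comp_swap (a b : α) (hv : Fin N → α) :
    (Fin.cons a (Fin.snoc hv b) : Fin (N + 2) → α) ∘ (Equiv.swap 0 (Fin.last (N + 1)))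
      = Fin.cons b (Fin.snoc hv a) := by
  funext i
  show (Fin.cons a (Fin.snoc hv b) : Fin (N + 2) → α) ((Equiv.swap 0 (Fin.last (N + 1))) i) = _
  by_cases h0 : i = 0
  · subst h0
    rw [Equiv.swap_apply_left, Fin.cons_zero]
    have : (Fin.last (N + 1)) = (Fin.last N).succ := (Fin.succ_last N).symm
    rw [this, Fin.cons_succ, Fin.snoc_last]
  · by_cases hl : i = Fin.last (N + 1)
    · subst hl
      rw [Equiv.swap_apply_right, Fin.cons_zero]
      have : (Fin.last (N + 1)) = (Fin.last N).succ := (Fin.succ_last N).symm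
      rw [this, Fin.cons_succ, Fin.snoc_last]
    · rw [Equiv.swap_apply_of_ne_of_ne h0 hl]
      obtain ⟨j, rfl⟩ := Fin.eq_succ_of_ne_zero h0
      rw [Fin.cons_succ, Fin.cons_succ]
      have hjl : j ≠ Fin.last N := by
        intro hj
        exact hl (by rw [hj, Fin.succ_last])
      obtain ⟨j', rfl⟩ := Fin.exists_castSucc_eq.2 hjl
      rw [Fin.snoc_castSucc, Fin.snoc_castSucc]

end FinPlumbing
section Core

variable {n : ℕ} {H : Type*} [AddCommGroup H]

lemma core (K : ℕ) (ρ : (Fin (K + 4) → Gn n) → Gn n → H) (g : Gn n → Gn n → H)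
    (hsymm : ∀ (h : Fin (K + 4) → Gn n) (σ : Equiv.Perm (Fin (K + 4))), ρ (h ∘ σ) = ρ h)
    (hcoc : ∀ (h : Fin (K + 4) → Gn n) (h' : Gn n),
      ρ (Function.update h 0 (h 0 + h')) = ρ h + fun x => ρ (Function.update h 0 h') (x + h 0))
    (hA : ∀ (hv : Fin (K + 3) → Gn n) (a : Gn n), delIter hv (g a) = ρ (Fin.snoc hv a))
    (hB : ∀ (hv : Fin (K + 2) → Gn n) (a : Gn n), delIter hv ((2 : ℤ) • g a) = 0) :
    ∃ F : Gn n → H, (∀ x, (2 : ℤ) • F x = 0) ∧ ∀ h, ρ h = delIter h F := by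
  classical
  -- rotation and swap symmetries
  have hrot : ∀ (hv : Fin (K + 3) → Gn n) (c : Gn n), ρ (Fin.snoc hv c) = ρ (Fin.cons c hv) := by
    intro hv c
    have := hsymm (Fin.cons c hv) (finRotate (K + 4))
    rwa [fin_comp_rotate c hv] at this
  have hswap : ∀ (hv : Fin (K + 2) → Gn n) (a b : Gn n),
      ρ (Fin.cons a (Fin.snoc hv b)) = ρ (Fin.cons b (Fin.snoc hv a)) := by
    intro hv a b
    have := hsymm (Fin.cons a (Fin.snoc hv b)) (Equiv.swap 0 (Fin.last (K + 3)))
    rw [fin_comp_swap a b hv] at this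
    exact this.symm
  have hRC : ∀ (hv : Fin (K + 3) → Gn n) (a b : Gn n),
      ρ (Fin.cons (a + b) hv) = ρ (Fin.cons a hv) + fun x => ρ (Fin.cons b hv) (x + a) := by
    intro hv a b
    have := hcoc (Fin.cons a hv) b
    simp only [Fin.cons_zero, Fin.update_cons_zero] at this
    exact this
  -- symmetrized derivative relations
  have hN1 : ∀ a b : Gn n, IsPolyN (K + 1) (del b (g a) - del a (g b)) := by
    intro a b hv
    have e1 : delIter hv (del b (g a) - del a (g b))
        = delIter (Fin.snoc hv b) (g a) - delIter (Fin.snoc hv a) (g b) := by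
      rw [delIter_eq_delList, delList_sub, delIter_snoc, delIter_snoc,
        delIter_eq_delList, delIter_eq_delList]
    rw [e1, hA, hA, hrot, hrot, hswap hv a b, sub_self]
  have hN2 : ∀ a b : Gn n, IsPolyN K (del a (del b (g a))) := by
    intro a b hv
    have e1 : delIter hv (del a (del b (g a))) = delIter (Fin.snoc (Fin.snoc hv a) b) (g a) := by
      rw [delIter_snoc, delIter_snoc]
    rw [e1, hA, hrot, hswap (Fin.snoc hv a) a b, ← hrot, ← hA, delIter_snoc, delIter_snoc,
      del_del_self]
    have e2 : delIter hv (-(del a ((2 : ℤ) • g b))) = -(delIter (Fin.snoc hv a) ((2 : ℤ) • g b)) := by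
      rw [delIter_snoc, delIter_eq_delList, delIter_eq_delList, delList_neg]
    rw [e2, hB, neg_zero]
  have hRD : ∀ a b : Gn n, IsPolyN (K + 2) (g (a + b) - g a - fun x => g b (x + a)) := by
    intro a b hv
    have e1 : delIter hv (g (a + b) - g a - fun x => g b (x + a))
        = delIter hv (g (a + b)) - delIter hv (g a) - fun x => delIter hv (g b) (x + a) := by
      rw [delIter_eq_delList, delList_sub, delList_sub, delList_comp]
      rfl
    rw [e1, hA, hA, hA]
    simp only [hrot]
    rw [hRC hv a b]
    abel
  -- coefficients of the solution
  obtain ⟨fc, hfc⟩ : ∃ fc : Finset (Fin n) → H, ∀ (T : Finset (Fin n)) (hT : T.Nonempty),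
      fc T = Dset (T.erase (T.min' hT)) (g (Pi.single (T.min' hT) 1)) 0 :=
    ⟨fun T => if hT : T.Nonempty then Dset (T.erase (T.min' hT)) (g (Pi.single (T.min' hT) 1)) 0
      else 0, fun T hT => dif_pos hT⟩
  set F : Gn n → H :=
    ∑ T ∈ Finset.univ.filter (fun T : Finset (Fin n) => K + 4 ≤ T.card), monF T (fc T) with hFdef
  have hfc_tors : ∀ T : Finset (Fin n), K + 4 ≤ T.card → (2 : ℤ) • fc T = 0 := by
    intro T hT
    have hTne : T.Nonempty := Finset.card_pos.1 (by omega)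
    rw [hfc T hTne]
    have h1 : (2 : ℤ) • Dset (T.erase (T.min' hTne)) (g (Pi.single (T.min' hTne) 1)) 0
        = Dset (T.erase (T.min' hTne)) ((2 : ℤ) • g (Pi.single (T.min' hTne) 1)) 0 := by
      rw [Dset_zsmul]; rfl
    rw [h1]
    have h2 : IsPolyN (K + 1) ((2 : ℤ) • g (Pi.single (T.min' hTne) 1)) := fun hv => hB hv _
    rw [Dset_eq_zero h2 (by rw [Finset.card_erase_of_mem (T.min'_mem hTne)]; omega)]
    rfl
  have h2F : ∀ x, (2 : ℤ) • F x = 0 := by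
    intro x
    rw [hFdef, Finset.sum_apply, Finset.smul_sum]
    refine Finset.sum_eq_zero fun T hT => ?_
    have hTc : K + 4 ≤ T.card := (Finset.mem_filter.1 hT).2
    show (2 : ℤ) • ((∏ i ∈ T, (x i).val) • fc T) = 0
    rw [smul_comm, hfc_tors T hTc, smul_zero]
  have hFcoeff : ∀ S : Finset (Fin n), Dset S F 0 = if K + 4 ≤ S.card then fc S else 0 := by
    intro S
    rw [hFdef, Dset_finset_sum, Finset.sum_apply]
    have h1 : ∀ T ∈ Finset.univ.filter (fun T : Finset (Fin n) => K + 4 ≤ T.card),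
        Dset S (monF T (fc T)) 0 = if T = S then fc T else 0 := by
      intro T _
      rw [Dset_monF S T (fc T)]
      by_cases h : S = T
      · rw [if_pos h, if_pos h.symm]
      · rw [if_neg h, if_neg (fun hh => h hh.symm)]
    rw [Finset.sum_congr rfl h1, Finset.sum_ite_eq' _ S _]
    simp [Finset.mem_filter]
  have hcons : ∀ (T : Finset (Fin n)) (i j : Fin n), i ∈ T → j ∈ T → i ≠ j → K + 4 ≤ T.card →
      Dset (T.erase i) (g (Pi.single i 1)) 0 = Dset (T.erase j) (g (Pi.single j 1)) 0 := by
    intro T i j hiT hjT hij hcard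
    have hji : j ∈ T.erase i := Finset.mem_erase.2 ⟨fun h => hij h.symm, hjT⟩
    have hij' : i ∈ T.erase j := Finset.mem_erase.2 ⟨hij, hiT⟩
    have e1 : T.erase i = insert j ((T.erase i).erase j) := (Finset.insert_erase hji).symm
    have e2 : T.erase j = insert i ((T.erase j).erase i) := (Finset.insert_erase hij').symm
    have e3 : (T.erase j).erase i = (T.erase i).erase j := Finset.erase_right_comm
    have hL : Dset (T.erase i) (g (Pi.single i 1))
        = Dset ((T.erase i).erase j) (del (Pi.single j 1) (g (Pi.single i 1))) := by
      conv_lhs => rw [e1]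
      rw [Dset_insert_inner (Finset.notMem_erase j _)]
    have hR : Dset (T.erase j) (g (Pi.single j 1))
        = Dset ((T.erase i).erase j) (del (Pi.single i 1) (g (Pi.single j 1))) := by
      conv_lhs => rw [e2]
      rw [Dset_insert_inner (Finset.notMem_erase i _), e3]
    have hdiff : Dset ((T.erase i).erase j) (del (Pi.single j 1) (g (Pi.single i 1)))
        - Dset ((T.erase i).erase j) (del (Pi.single i 1) (g (Pi.single j 1))) = 0 := by
      rw [← Dset_sub]
      refine Dset_eq_zero (hN1 _ _) ?_
      rw [Finset.card_erase_of_mem hji, Finset.card_erase_of_mem hiT]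
      omega
    have h0 := sub_eq_zero.1 hdiff
    rw [hL, hR]
    exact congrFun h0 0
  -- the basis case of the main estimate
  have hU : ∀ i : Fin n, IsPolyN (K + 2) (g (Pi.single i 1) - del (Pi.single i 1) F) := by
    intro i
    set v : Gn n := Pi.single i 1 with hvdef
    set u : Gn n → H := g v - del v F with hu
    have hurepr : u = ∑ S : Finset (Fin n), monF S (Dset S u 0) := by
      funext x
      rw [← eval_monF u x, Finset.sum_apply]
    rw [hurepr]
    refine IsPolyN.finset_sum _ _ (fun S _ => ?_)
    have hsplit : Dset S u 0 = Dset S (g v) 0 - Dset S (del v F) 0 := by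
      rw [hu, Dset_sub]; rfl
    by_cases hS3 : K + 3 ≤ S.card
    · have hc0 : Dset S u 0 = 0 := by
        by_cases hiS : i ∈ S
        · have h1 : Dset S (g v) = 0 := by
            have e1 : S = insert i (S.erase i) := (Finset.insert_erase hiS).symm
            have hcard : K + 2 ≤ (S.erase i).card := by
              rw [Finset.card_erase_of_mem hiS]; omega
            obtain ⟨j, hj⟩ : (S.erase i).Nonempty := Finset.card_pos.1 (by omega)
            have e2 : S.erase i = insert j ((S.erase i).erase j) := (Finset.insert_erase hj).symm
            have step : Dset S (g v)
                = Dset ((S.erase i).erase j) (del (Pi.single j 1) (del v (g v))) := by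
              conv_lhs => rw [e1]
              rw [Dset_insert_inner (Finset.notMem_erase i S)]
              conv_lhs => rw [e2]
              rw [Dset_insert_inner (Finset.notMem_erase j _)]
            rw [step, del_comm]
            refine Dset_eq_zero (hN2 v (Pi.single j 1)) ?_
            rw [Finset.card_erase_of_mem hj, Finset.card_erase_of_mem hiS]
            omega
          have h2 : Dset S (del v F) = 0 := by
            have e1 : S = insert i (S.erase i) := (Finset.insert_erase hiS).symm
            have step : Dset S (del v F) = Dset (S.erase i) (del v (del v F)) := by
              conv_lhs => rw [e1]
              rw [Dset_insert_inner (Finset.notMem_erase i S)]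
            rw [step, del_del_self]
            have hzero : (2 : ℤ) • F = 0 := funext h2F
            rw [hzero, del_zero_fun, neg_zero, Dset_zero_fun]
          rw [hsplit, h1, h2]
          simp
        · have hcard4 : K + 4 ≤ (insert i S).card := by
            rw [Finset.card_insert_of_notMem hiS]; omega
          have h2 : Dset S (del v F) 0 = fc (insert i S) := by
            rw [← Dset_insert_inner hiS, hFcoeff (insert i S), if_pos hcard4]
          have h1 : Dset S (g v) 0 = fc (insert i S) := by
            have hTne : (insert i S).Nonempty := ⟨i, Finset.mem_insert_self i S⟩
            rw [hfc (insert i S) hTne]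
            by_cases hji : (insert i S).min' hTne = i
            · rw [hji, Finset.erase_insert hiS]
            · have hjmem : (insert i S).min' hTne ∈ insert i S := (insert i S).min'_mem hTne
              have hkey := hcons (insert i S) i ((insert i S).min' hTne)
                (Finset.mem_insert_self i S) hjmem (fun h => hji h.symm) hcard4
              rw [← hkey, Finset.erase_insert hiS]
          rw [hsplit, h1, h2, sub_self]
      rw [hc0, monF_zero]
      exact isPolyN_zero _
    · rcases Finset.eq_empty_or_nonempty S with rfl | hSne
      · rw [monF_empty]
        exact isPolyN_const _ _
      · have hSc : S.card ≤ K + 2 := by omega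
        have hb2 : (2 : ℤ) • Dset S (del v F) 0 = 0 := by
          have h1 : (2 : ℤ) • Dset S (del v F) = Dset S (del v ((2 : ℤ) • F)) := by
            rw [del_zsmul, Dset_zsmul]
          have hzero : (2 : ℤ) • F = 0 := funext h2F
          have h2 : Dset S (del v ((2 : ℤ) • F)) = 0 := by
            rw [hzero, del_zero_fun, Dset_zero_fun]
          calc (2 : ℤ) • Dset S (del v F) 0 = ((2 : ℤ) • Dset S (del v F)) 0 := rfl
            _ = Dset S (del v ((2 : ℤ) • F)) 0 := by rw [h1]
            _ = 0 := by rw [h2]; rfl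
        have ha2 : (2 : ℤ) ^ (K + 2 - S.card) • ((2 : ℤ) • Dset S (g v) 0) = 0 := by
          have hsw : (2 : ℤ) • Dset S (g v) 0 = Dset S ((2 : ℤ) • g v) 0 := by
            rw [Dset_zsmul]; rfl
          rw [hsw]
          have hpoly : IsPolyN (K + 1) ((2 : ℤ) • g v) := fun hv => hB hv v
          by_cases hS2 : S.card ≤ K + 1
          · have ht := Dset_torsion hpoly hSne hS2
            calc (2 : ℤ) ^ (K + 2 - S.card) • Dset S ((2 : ℤ) • g v) 0
                = ((2 : ℤ) ^ (K + 1 + 1 - S.card) • Dset S ((2 : ℤ) • g v)) 0 := by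
                  rw [Pi.smul_apply]
              _ = 0 := by rw [ht]; rfl
          · have hzz : Dset S ((2 : ℤ) • g v) = 0 := Dset_eq_zero hpoly (by omega)
            rw [hzz]
            show (2 : ℤ) ^ (K + 2 - S.card) • (0 : H) = 0
            rw [smul_zero]
        have htors : (2 : ℤ) ^ (K + 2 - S.card + 1) • Dset S u 0 = 0 := by
          rw [hsplit, smul_sub, pow_succ, mul_smul, mul_smul, ha2]
          rw [show (2:ℤ) ^ (K + 2 - S.card) • ((2:ℤ) • Dset S (del v F) 0) = 0 by
            rw [hb2, smul_zero]]
          rw [sub_zero]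
        have hfin := monF_isPolyN (K + 2) S (K + 2 - S.card) (Dset S u 0) (by omega) htors
        exact hfin
  -- extend to all directions
  have hQ : ∀ a : Gn n, IsPolyN (K + 2) (g a - del a F) := by
    have hQ0 : IsPolyN (K + 2) (g 0 - del (0 : Gn n) F) := by
      have h00 := hRD 0 0
      have hfun : g (0 + 0) - g 0 - (fun x => g 0 (x + 0)) = -(g 0) := by
        funext x
        show g (0 + 0) x - g 0 x - g 0 (x + 0) = -(g 0 x)
        rw [zero_add, add_zero]
        abel
      rw [hfun] at h00
      have hg0 : IsPolyN (K + 2) (g 0) := by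
        have := h00.neg
        rwa [neg_neg] at this
      rw [del_zero_dir, sub_zero]
      exact hg0
    intro a
    have hrep : a = ∑ i2, Pi.single i2 (a i2) := (Finset.univ_sum_single a).symm
    rw [hrep]
    refine Finset.sum_induction _ (fun x => IsPolyN (K + 2) (g x - del x F)) ?_ ?_ ?_
    · intro x y hx hy
      have hfun : g (x + y) - del (x + y) F =
          (((g x - del x F) + fun z => (g y - del y F) (z + x))
            + (g (x + y) - g x - fun z => g y (z + x))) := by
        funext z
        show g (x + y) z - del (x + y) F z
          = ((g x z - del x F z) + (g y (z + x) - del y F (z + x)))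
            + (g (x + y) z - g x z - g y (z + x))
        rw [del_apply, del_apply, del_apply, ← add_assoc z x y]
        abel
      rw [hfun]
      exact (hx.add (hy.comp_add x)).add (hRD x y)
    · exact hQ0
    · intro i2 _
      have hz : ∀ z : ZMod 2, z = 0 ∨ z = 1 := by decide
      rcases hz (a i2) with h | h
      · rw [h, Pi.single_zero]
        exact hQ0
      · rw [h]
        exact hU i2
  refine ⟨F, h2F, ?_⟩
  intro h
  have hsnoc : Fin.snoc (Fin.init h) (h (Fin.last (K + 3))) = h := Fin.snoc_init_self h
  have h1 : ρ h = delIter (Fin.init h) (g (h (Fin.last (K + 3)))) := by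
    conv_lhs => rw [← hsnoc]
    exact (hA _ _).symm
  set a := h (Fin.last (K + 3)) with hadef
  have hsum : g a = (g a - del a F) + del a F := by abel
  rw [h1, hsum]
  have hdist : delIter (Fin.init h) ((g a - del a F) + del a F)
      = delIter (Fin.init h) (g a - del a F) + delIter (Fin.init h) (del a F) := by
    rw [delIter_eq_delList, delList_add, delIter_eq_delList, delIter_eq_delList]
  rw [hdist, hQ a (Fin.init h), zero_add, ← delIter_snoc, hsnoc]

end Core
/-- strongly 2-homogeneous cocycles are exactly the `(½ℤ)/ℤ`-valued
coboundaries, for `k ≥ 3`.  A `k`-cocycle `ρ` on `𝔽₂ⁿ` taking values in the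
`2`-torsion subgroup `(½ℤ)/ℤ ⊆ 𝕋` is a coboundary with values in `(½ℤ)/ℤ` iff it is
strongly `2`-homogeneous, i.e. `ρ = d^k ψ` for some `ψ : C¹(𝔽₂ⁿ) → 𝕋` with `2ψ` a
polynomial of degree at most `k-2` on the space of 1-cubes. -/
theorem strongly_two_homogeneous_iff_coboundary
    (n k : ℕ) (hk : 3 ≤ k) (ρ : (Fin (k + 1) → Gn n) → Gn n → 𝕋)
    (htors : ∀ (h : Fin (k + 1) → Gn n) (x : Gn n), (2 : ℤ) • ρ h x = 0)
    (hsymm : ∀ (h : Fin (k + 1) → Gn n) (σ : Equiv.Perm (Fin (k + 1))), ρ (h ∘ σ) = ρ h)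
    (hcoc : ∀ (h : Fin (k + 1) → Gn n) (h' : Gn n),
      ρ (Function.update h 0 (h 0 + h')) =
        ρ h + (fun x => ρ (Function.update h 0 h') (x + h 0))) :
    (∃ F : Gn n → 𝕋, (∀ x, (2 : ℤ) • F x = 0) ∧ ∀ h, ρ h = delIter h F) ↔
    (∃ ψ : Gn n → Gn n → 𝕋,
      (∀ (h : Fin k → Gn n) (hl x : Gn n),
        ρ (Fin.snoc h hl) x =
          ∑ ω : Gn k, ((-1 : ℤ) ^ (k - ∑ i, (ω i).val)) •
            ψ (x + ∑ i, ω i • h i) (x + ∑ i, ω i • h i + hl)) ∧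
      (∀ (h : Fin (k - 1) → Gn n) (hl x : Gn n),
        ∑ ω : Gn (k - 1), ((-1 : ℤ) ^ (∑ i, (ω i).val)) •
          ((2 : ℤ) • ψ (x + ∑ i, ω i • h i) (x + ∑ i, ω i • h i + hl)) = 0)) := by
  obtain ⟨K, rfl⟩ : ∃ K, k = K + 3 := ⟨k - 3, by omega⟩
  constructor
  · rintro ⟨F, hF2, hFd⟩
    refine ⟨fun x y => F y - F x, ?_, ?_⟩
    · intro h hl x
      rw [hFd (Fin.snoc h hl), delIter_snoc, expand]
      rfl
    · intro h hl x
      refine Finset.sum_eq_zero fun ω _ => ?_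
      have h1 : (2 : ℤ) • ((fun x y : Gn n => F y - F x)
          (x + ∑ i, ω i • h i) (x + ∑ i, ω i • h i + hl)) = 0 := by
        show (2 : ℤ) • (F (x + ∑ i, ω i • h i + hl) - F (x + ∑ i, ω i • h i)) = 0
        rw [smul_sub, hF2, hF2, sub_zero]
      rw [h1, smul_zero]
  · rintro ⟨ψ, hi, hii⟩
    have hA : ∀ (hv : Fin (K + 3) → Gn n) (a : Gn n),
        delIter hv (fun x => ψ x (x + a)) = ρ (Fin.snoc hv a) := by
      intro hv a
      funext x
      rw [expand, hi hv a x]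
    have hB : ∀ (hv : Fin (K + 2) → Gn n) (a : Gn n),
        delIter hv ((2 : ℤ) • fun x => ψ x (x + a)) = 0 := by
      intro hv a
      funext x
      rw [expand]
      have h0 : ∑ ω : Gn (K + 2), ((-1 : ℤ) ^ (∑ i, (ω i).val)) •
          ((2 : ℤ) • ψ (x + ∑ i, ω i • hv i) (x + ∑ i, ω i • hv i + a)) = 0 := hii hv a x
      have h2 : ∀ ω : Gn (K + 2), ((-1 : ℤ) ^ (K + 2 - ∑ i, (ω i).val)) •
            (((2 : ℤ) • fun z => ψ z (z + a)) (x + ∑ i, ω i • hv i))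
          = (-1 : ℤ) ^ (K + 2) • (((-1 : ℤ) ^ (∑ i, (ω i).val)) •
            ((2 : ℤ) • ψ (x + ∑ i, ω i • hv i) (x + ∑ i, ω i • hv i + a))) := by
        intro ω
        rw [smul_smul, ← neg_one_pow_sub (K + 2) _ (sumval_le ω)]
        rfl
      rw [Finset.sum_congr rfl (fun ω _ => h2 ω), ← Finset.smul_sum, h0, smul_zero]
      rfl
    obtain ⟨F, h2F, hρ⟩ := core K ρ (fun a x => ψ x (x + a)) hsymm hcoc hA hB
    exact ⟨F, h2F, hρ⟩
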